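/- arXiv:2504.05688 — 2 statements merged into one kernel-verified Lean document; each statement's English description precedes it below -/
import Mathlib

section
/- If n has at least three distinct prime factors, then there exists a vector α ∈ V_n ∩ (ℤ_{≥0})^n which is not a ℤ_{≥0}-linear combination of the vectors v^(p)_i for p ranging over prime factors of n and 0 ≤ i ≤ n/p - 1. Explicitly, for distinct prime factors p < q < r of n, the vector α' = Σ_{j=2}^{p} v^(q)_{n_p j mod n_q} + v^(r)_{(n_p + n_q) mod n_r} - v^(p)_{n_q mod n_p} is such a vector. -/
/-- The `k`-th standard basis vector of `ℤ^n`. -/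
def stdVec (n : ℕ) (k : ℕ) : Fin n → ℤ := fun m => if (m : ℕ) = k then 1 else 0

/-- `v^(d)_i = ∑_{j=0}^{d-1} e_{i + (n/d) j}` in `ℤ^n`. -/
def cycVec (n d : ℕ) (i : ℕ) : Fin n → ℤ := ∑ j ∈ Finset.range d, stdVec n (i + (n / d) * j)

lemma cycVec_nonneg (n d i : ℕ) (m : Fin n) : 0 ≤ cycVec n d i m := by
  unfold cycVec
  rw [Finset.sum_apply]
  refine Finset.sum_nonneg fun j _ => ?_
  unfold stdVec
  split <;> norm_num

lemma cycVec_apply {n d : ℕ} (hd : d ∣ n) (hn : 0 < n) {i : ℕ} (hi : i < n / d) (m : Fin n) :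
    cycVec n d i m = if (m : ℕ) % (n / d) = i then 1 else 0 := by
  have hd0 : 0 < d := Nat.pos_of_dvd_of_pos hd hn
  have hnd : 0 < n / d := Nat.div_pos (Nat.le_of_dvd hn hd) hd0
  unfold cycVec stdVec
  rw [Finset.sum_apply]
  by_cases h : (m : ℕ) % (n / d) = i
  · have hiff : ∀ j : ℕ, ((m : ℕ) = i + (n/d) * j) ↔ j = (m : ℕ) / (n / d) := by
      intro j
      constructor
      · intro he
        rw [he, Nat.add_mul_div_left _ _ hnd, Nat.div_eq_of_lt hi, zero_add]
      · intro he
        rw [he, ← h]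
        have := Nat.div_add_mod (m : ℕ) (n / d)
        omega
    calc (∑ j ∈ Finset.range d, if (m : ℕ) = i + n / d * j then (1:ℤ) else 0)
        = ∑ j ∈ Finset.range d, if j = (m : ℕ) / (n / d) then (1:ℤ) else 0 :=
          Finset.sum_congr rfl fun j _ => if_congr (hiff j) rfl rfl
      _ = 1 := by
          rw [Finset.sum_ite_eq' (Finset.range d) _ (fun _ => (1:ℤ))]
          rw [if_pos]
          rw [Finset.mem_range]
          apply Nat.div_lt_of_lt_mul
          calc (m : ℕ) < n := m.isLt
            _ = n / d * d := (Nat.div_mul_cancel hd).symm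
      _ = if (m : ℕ) % (n / d) = i then 1 else 0 := by rw [if_pos h]
  · rw [if_neg h]
    refine Finset.sum_eq_zero fun j _ => ?_
    rw [if_neg]
    intro he
    apply h
    rw [he, Nat.add_mul_mod_self_left, Nat.mod_eq_of_lt hi]




lemma stdVec_root_sum {n : ℕ} (ζ : ℂ) {k : ℕ} (hk : k < n) :
    ∑ m : Fin n, ((stdVec n k m : ℤ) : ℂ) * ζ ^ (m : ℕ) = ζ ^ k := by
  unfold stdVec
  have : ∀ m : Fin n, (((if (m : ℕ) = k then (1:ℤ) else 0) : ℤ) : ℂ) * ζ ^ (m : ℕ)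
      = if m = (⟨k, hk⟩ : Fin n) then ζ ^ k else 0 := by
    intro m
    by_cases h : m = (⟨k, hk⟩ : Fin n)
    · rw [if_pos h, if_pos (by rw [h])]
      push_cast; rw [one_mul, h]
    · rw [if_neg h, if_neg (fun hh => h (Fin.ext hh))]
      push_cast; rw [zero_mul]
  rw [Finset.sum_congr rfl fun m _ => this m, Finset.sum_ite_eq' Finset.univ _ (fun _ => ζ ^ k),
    if_pos (Finset.mem_univ _)]

lemma cycVec_root_sum {n d : ℕ} (hd : d ∣ n) (hd1 : 1 < d) (hn : 0 < n) {ζ : ℂ}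
    (hζ : IsPrimitiveRoot ζ n) {i : ℕ} (hi : i < n / d) :
    ∑ m : Fin n, ((cycVec n d i m : ℤ) : ℂ) * ζ ^ (m : ℕ) = 0 := by
  have hd0 : 0 < d := by omega
  have hnd : 0 < n / d := Nat.div_pos (Nat.le_of_dvd hn hd) hd0
  unfold cycVec
  have hlt : ∀ j ∈ Finset.range d, i + n / d * j < n := by
    intro j hj
    rw [Finset.mem_range] at hj
    calc i + n / d * j < n / d + n / d * j := by omega
      _ = n / d * (j + 1) := by ring
      _ ≤ n / d * d := Nat.mul_le_mul_left _ (by omega)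
      _ = n := Nat.div_mul_cancel hd
  calc ∑ m : Fin n, (((∑ j ∈ Finset.range d, stdVec n (i + n / d * j)) m : ℤ) : ℂ) * ζ ^ (m:ℕ)
      = ∑ m : Fin n, ∑ j ∈ Finset.range d, ((stdVec n (i + n / d * j) m : ℤ) : ℂ) * ζ ^ (m:ℕ) := by
        refine Finset.sum_congr rfl fun m _ => ?_
        rw [Finset.sum_apply]
        push_cast
        rw [Finset.sum_mul]
    _ = ∑ j ∈ Finset.range d, ∑ m : Fin n, ((stdVec n (i + n / d * j) m : ℤ) : ℂ) * ζ ^ (m:ℕ) :=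
        Finset.sum_comm
    _ = ∑ j ∈ Finset.range d, ζ ^ (i + n / d * j) :=
        Finset.sum_congr rfl fun j hj => stdVec_root_sum ζ (hlt j hj)
    _ = ∑ j ∈ Finset.range d, ζ ^ i * (ζ ^ (n / d)) ^ j := by
        refine Finset.sum_congr rfl fun j hj => ?_
        rw [pow_add, pow_mul]
    _ = ζ ^ i * ∑ j ∈ Finset.range d, (ζ ^ (n / d)) ^ j := by rw [Finset.mul_sum]
    _ = 0 := by
        have hne : ζ ^ (n / d) ≠ 1 := by
          intro h1
          have := (IsPrimitiveRoot.pow_eq_one_iff_dvd hζ (n / d)).mp h1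
          have := Nat.le_of_dvd hnd this
          have : n / d < n := Nat.div_lt_self hn hd1
          omega
        rw [geom_sum_eq hne]
        have : (ζ ^ (n / d)) ^ d = 1 := by
          rw [← pow_mul, Nat.div_mul_cancel hd, hζ.pow_eq_one]
        rw [this, sub_self, zero_div, mul_zero]

lemma dvd_shift {d nn a t : ℤ} (hdn : d ∣ nn) : d ∣ a + nn * t ↔ d ∣ a := by
  constructor
  · intro h
    have h2 := dvd_sub h (hdn.mul_right t)
    simpa using h2
  · intro h
    exact dvd_add h (hdn.mul_right t)

lemma modiff (d a b : ℕ) : (a % d = b % d) ↔ ((d:ℤ) ∣ (a:ℤ) - b) := by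
  constructor
  · intro h
    exact (dvd_sub_comm).mp ((Nat.modEq_iff_dvd).mp h)
  · intro h
    exact (Nat.modEq_iff_dvd).mpr ((dvd_sub_comm).mp h)


lemma prime_not_dvd_int {a b : ℕ} (ha : a.Prime) (hb : b.Prime) (hab : a ≠ b) :
    ¬ ((a:ℤ) ∣ (b:ℤ)) := fun h =>
  hab ((Nat.prime_dvd_prime_iff_eq ha hb).mp (Int.natCast_dvd_natCast.mp h))

lemma int_dvd_cancel {a b c : ℤ} (hc : c ≠ 0) (h : a * c ∣ b * c) : a ∣ b :=
  (mul_dvd_mul_iff_right hc).mp h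

lemma pqr_decomp {n p q r : ℕ} (hp : p.Prime) (hq : q.Prime) (hr : r.Prime)
    (hpn : p ∣ n) (hqn : q ∣ n) (hrn : r ∣ n) (hpq : p ≠ q) (hpr : p ≠ r) (hqr : q ≠ r) :
    p * q * r ∣ n := by
  have c1 : Nat.Coprime p q := (Nat.coprime_primes hp hq).mpr hpq
  have c2 : Nat.Coprime p r := (Nat.coprime_primes hp hr).mpr hpr
  have c3 : Nat.Coprime q r := (Nat.coprime_primes hq hr).mpr hqr
  have h1 : p * q ∣ n := Nat.Coprime.mul_dvd_of_dvd_of_dvd c1 hpn hqn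
  exact Nat.Coprime.mul_dvd_of_dvd_of_dvd (Nat.Coprime.mul c2 c3) h1 hrn

lemma no_coset {n p q r s : ℕ} (hn : 0 < n)
    (hp : p.Prime) (hq : q.Prime) (hr : r.Prime) (hs : s.Prime)
    (hpn : p ∣ n) (hqn : q ∣ n) (hrn : r ∣ n) (hsn : s ∣ n)
    (hpq : p < q) (hqr : q < r) (i : ℤ)
    (H : ∀ z : ℤ,
      ¬ (((n / p : ℕ) : ℤ) ∣ (i + ((n / s : ℕ) : ℤ) * z - ((n / q : ℕ) : ℤ))) ∧
      ((∃ j : ℕ, 2 ≤ j ∧ j ≤ p ∧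
          ((n / q : ℕ) : ℤ) ∣ (i + ((n / s : ℕ) : ℤ) * z - ((n / p : ℕ) : ℤ) * (j:ℤ))) ∨
        ((n / r : ℕ) : ℤ) ∣ (i + ((n / s : ℕ) : ℤ) * z - (((n / p : ℕ) : ℤ) + ((n / q : ℕ) : ℤ))))) :
    False := by
  have hPz : Prime ((p:ℕ):ℤ) := Nat.prime_iff_prime_int.mp hp
  have hQz : Prime ((q:ℕ):ℤ) := Nat.prime_iff_prime_int.mp hq
  have hRz : Prime ((r:ℕ):ℤ) := Nat.prime_iff_prime_int.mp hr
  have hSz : Prime ((s:ℕ):ℤ) := Nat.prime_iff_prime_int.mp hs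
  by_cases hsq : s = q
  · -- case s = q
    rw [hsq] at H
    obtain ⟨G, hG⟩ : ∃ G : ℕ, n = p * q * r * G := ⟨n / (p*q*r), by
      rw [Nat.mul_div_cancel' (pqr_decomp hp hq hr hpn hqn hrn (by omega) (by omega) (by omega))]⟩
    have hG0 : 0 < G := by
      rcases Nat.eq_zero_or_pos G with h | h
      · rw [h, Nat.mul_zero] at hG; omega
      · exact h
    have hnp : n / p = q * r * G := by
      rw [hG, show p*q*r*G = p*(q*r*G) by ring, Nat.mul_div_cancel_left _ hp.pos]
    have hnq : n / q = p * r * G := by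
      rw [hG, show p*q*r*G = q*(p*r*G) by ring, Nat.mul_div_cancel_left _ hq.pos]
    have hnr : n / r = p * q * G := by
      rw [hG, show p*q*r*G = r*(p*q*G) by ring, Nat.mul_div_cancel_left _ hr.pos]
    have hNp : ((n/p : ℕ) : ℤ) = (q:ℤ)*(r:ℤ)*(G:ℤ) := by rw [hnp]; push_cast; ring
    have hNq : ((n/q : ℕ) : ℤ) = (p:ℤ)*(r:ℤ)*(G:ℤ) := by rw [hnq]; push_cast; ring
    have hNr : ((n/r : ℕ) : ℤ) = (p:ℤ)*(q:ℤ)*(G:ℤ) := by rw [hnr]; push_cast; ring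
    have hGz0 : ((G:ℕ):ℤ) ≠ 0 := by exact_mod_cast hG0.ne'
    have hexq : ∃ j : ℕ, 2 ≤ j ∧ j ≤ p ∧ ((n/q:ℕ):ℤ) ∣ (i - ((n/p:ℕ):ℤ) * (j:ℤ)) := by
      rcases (H 0).2 with ⟨j, h2, h3, hQ⟩ | hR0
      · refine ⟨j, h2, h3, ?_⟩
        rw [show i - ((n/p:ℕ):ℤ)*(j:ℤ) = i + ((n/q:ℕ):ℤ)*0 - ((n/p:ℕ):ℤ)*(j:ℤ) by ring]
        exact hQ
      · rcases (H 1).2 with ⟨j, h2, h3, hQ⟩ | hR1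
        · refine ⟨j, h2, h3, ?_⟩
          have h4 := dvd_sub hQ (dvd_mul_right ((n/q:ℕ):ℤ) 1)
          rw [show i + ((n/q:ℕ):ℤ)*1 - ((n/p:ℕ):ℤ)*(j:ℤ) - ((n/q:ℕ):ℤ)*1
              = i - ((n/p:ℕ):ℤ)*(j:ℤ) by ring] at h4
          exact h4
        · exfalso
          have h4 := dvd_sub hR1 hR0
          rw [show (i + ((n/q:ℕ):ℤ)*1 - (((n/p:ℕ):ℤ) + ((n/q:ℕ):ℤ)))
              - (i + ((n/q:ℕ):ℤ)*0 - (((n/p:ℕ):ℤ) + ((n/q:ℕ):ℤ))) = ((n/q:ℕ):ℤ) by ring] at h4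
          rw [hNr, hNq] at h4
          have h5 : (q:ℤ) ∣ (r:ℤ) := by
            apply int_dvd_cancel (show ((p:ℤ)*(G:ℤ)) ≠ 0 by
              exact_mod_cast Nat.mul_ne_zero hp.pos.ne' hG0.ne')
            rw [show (q:ℤ)*((p:ℤ)*(G:ℤ)) = (p:ℤ)*(q:ℤ)*(G:ℤ) by ring,
                show (r:ℤ)*((p:ℤ)*(G:ℤ)) = (p:ℤ)*(r:ℤ)*(G:ℤ) by ring]
            exact h4
          exact prime_not_dvd_int hq hr (by omega) h5
    obtain ⟨j, h2, h3, hQ⟩ := hexq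
    obtain ⟨a, ha⟩ := hQ
    exact (H (1 - a)).1 ⟨(j:ℤ), by linear_combination ha⟩
  by_cases hsr : s = r
  · -- case s = r
    rw [hsr] at H
    obtain ⟨G, hG⟩ : ∃ G : ℕ, n = p * q * r * G := ⟨n / (p*q*r), by
      rw [Nat.mul_div_cancel' (pqr_decomp hp hq hr hpn hqn hrn (by omega) (by omega) (by omega))]⟩
    have hG0 : 0 < G := by
      rcases Nat.eq_zero_or_pos G with h | h
      · rw [h, Nat.mul_zero] at hG; omega
      · exact h
    have hnp : n / p = q * r * G := by
      rw [hG, show p*q*r*G = p*(q*r*G) by ring, Nat.mul_div_cancel_left _ hp.pos]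
    have hnq : n / q = p * r * G := by
      rw [hG, show p*q*r*G = q*(p*r*G) by ring, Nat.mul_div_cancel_left _ hq.pos]
    have hnr : n / r = p * q * G := by
      rw [hG, show p*q*r*G = r*(p*q*G) by ring, Nat.mul_div_cancel_left _ hr.pos]
    have hNp : ((n/p : ℕ) : ℤ) = (q:ℤ)*(r:ℤ)*(G:ℤ) := by rw [hnp]; push_cast; ring
    have hNq : ((n/q : ℕ) : ℤ) = (p:ℤ)*(r:ℤ)*(G:ℤ) := by rw [hnq]; push_cast; ring
    have hNr : ((n/r : ℕ) : ℤ) = (p:ℤ)*(q:ℤ)*(G:ℤ) := by rw [hnr]; push_cast; ring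
    have hexr : ((n/r:ℕ):ℤ) ∣ (i - (((n/p:ℕ):ℤ) + ((n/q:ℕ):ℤ))) := by
      rcases (H 0).2 with ⟨j, h2, h3, hQ0⟩ | hR0
      · rcases (H 1).2 with ⟨j', h2', h3', hQ1⟩ | hR1
        · exfalso
          have h4 := dvd_sub hQ1 hQ0
          rw [show (i + ((n/r:ℕ):ℤ)*1 - ((n/p:ℕ):ℤ)*(j':ℤ))
              - (i + ((n/r:ℕ):ℤ)*0 - ((n/p:ℕ):ℤ)*(j:ℤ))
              = ((n/r:ℕ):ℤ) + ((n/p:ℕ):ℤ)*((j:ℤ) - (j':ℤ)) by ring] at h4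
          rw [hNq, hNr, hNp] at h4
          have h5 : (p:ℤ)*(r:ℤ) ∣ (q:ℤ)*((p:ℤ) + (r:ℤ)*((j:ℤ) - (j':ℤ))) := by
            apply int_dvd_cancel (show ((G:ℕ):ℤ) ≠ 0 by exact_mod_cast hG0.ne')
            rw [show (p:ℤ)*(r:ℤ)*(G:ℤ) = (p:ℤ)*(r:ℤ)*(G:ℤ) by ring,
                show (q:ℤ)*((p:ℤ) + (r:ℤ)*((j:ℤ) - (j':ℤ)))*(G:ℤ)
                  = (p:ℤ)*(q:ℤ)*(G:ℤ) + (q:ℤ)*(r:ℤ)*(G:ℤ)*((j:ℤ) - (j':ℤ)) by ring]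
            exact h4
          have h6 : (r:ℤ) ∣ (q:ℤ)*((p:ℤ) + (r:ℤ)*((j:ℤ)-(j':ℤ))) :=
            dvd_trans (dvd_mul_left (r:ℤ) (p:ℤ)) h5
          rcases hRz.dvd_mul.mp h6 with h7 | h7
          · exact prime_not_dvd_int hr hq (by omega) h7
          · have h8 : (r:ℤ) ∣ (p:ℤ) := by
              have h9 := dvd_sub h7 (dvd_mul_right (r:ℤ) ((j:ℤ)-(j':ℤ)))
              rw [show (p:ℤ) + (r:ℤ)*((j:ℤ)-(j':ℤ)) - (r:ℤ)*((j:ℤ)-(j':ℤ)) = (p:ℤ) by ring] at h9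
              exact h9
            exact prime_not_dvd_int hr hp (by omega) h8
        · have h4 := dvd_sub hR1 (dvd_mul_right ((n/r:ℕ):ℤ) 1)
          rw [show i + ((n/r:ℕ):ℤ)*1 - (((n/p:ℕ):ℤ) + ((n/q:ℕ):ℤ)) - ((n/r:ℕ):ℤ)*1
              = i - (((n/p:ℕ):ℤ) + ((n/q:ℕ):ℤ)) by ring] at h4
          exact h4
      · rw [show i - (((n/p:ℕ):ℤ) + ((n/q:ℕ):ℤ))
            = i + ((n/r:ℕ):ℤ)*0 - (((n/p:ℕ):ℤ) + ((n/q:ℕ):ℤ)) by ring]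
        exact hR0
    obtain ⟨b, hb⟩ := hexr
    exact (H (-b)).1 ⟨1, by linear_combination hb⟩
  by_cases hsp : s = p
  · -- case s = p
    rw [hsp] at H
    obtain ⟨G, hG⟩ : ∃ G : ℕ, n = p * q * r * G := ⟨n / (p*q*r), by
      rw [Nat.mul_div_cancel' (pqr_decomp hp hq hr hpn hqn hrn (by omega) (by omega) (by omega))]⟩
    have hG0 : 0 < G := by
      rcases Nat.eq_zero_or_pos G with h | h
      · rw [h, Nat.mul_zero] at hG; omega
      · exact h
    have hnp : n / p = q * r * G := by
      rw [hG, show p*q*r*G = p*(q*r*G) by ring, Nat.mul_div_cancel_left _ hp.pos]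
    have hnq : n / q = p * r * G := by
      rw [hG, show p*q*r*G = q*(p*r*G) by ring, Nat.mul_div_cancel_left _ hq.pos]
    have hnr : n / r = p * q * G := by
      rw [hG, show p*q*r*G = r*(p*q*G) by ring, Nat.mul_div_cancel_left _ hr.pos]
    have hNp : ((n/p : ℕ) : ℤ) = (q:ℤ)*(r:ℤ)*(G:ℤ) := by rw [hnp]; push_cast; ring
    have hNq : ((n/q : ℕ) : ℤ) = (p:ℤ)*(r:ℤ)*(G:ℤ) := by rw [hnq]; push_cast; ring
    have hNr : ((n/r : ℕ) : ℤ) = (p:ℤ)*(q:ℤ)*(G:ℤ) := by rw [hnr]; push_cast; ring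
    have hexp : ∃ (k₁ : ℤ) (j₁ : ℕ), 2 ≤ j₁ ∧ j₁ ≤ p ∧
        ((n/q:ℕ):ℤ) ∣ (i + ((n/p:ℕ):ℤ)*k₁ - ((n/p:ℕ):ℤ)*(j₁:ℤ)) := by
      rcases (H 0).2 with ⟨j, h2, h3, hQ⟩ | hR0
      · exact ⟨0, j, h2, h3, hQ⟩
      · rcases (H 1).2 with ⟨j, h2, h3, hQ⟩ | hR1
        · exact ⟨1, j, h2, h3, hQ⟩
        · exfalso
          have h4 := dvd_sub hR1 hR0
          rw [show (i + ((n/p:ℕ):ℤ)*1 - (((n/p:ℕ):ℤ) + ((n/q:ℕ):ℤ)))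
              - (i + ((n/p:ℕ):ℤ)*0 - (((n/p:ℕ):ℤ) + ((n/q:ℕ):ℤ))) = ((n/p:ℕ):ℤ) by ring] at h4
          rw [hNr, hNp] at h4
          have h5 : (p:ℤ) ∣ (r:ℤ) := by
            apply int_dvd_cancel (show ((q:ℤ)*(G:ℤ)) ≠ 0 by
              exact_mod_cast Nat.mul_ne_zero hq.pos.ne' hG0.ne')
            rw [show (p:ℤ)*((q:ℤ)*(G:ℤ)) = (p:ℤ)*(q:ℤ)*(G:ℤ) by ring,
                show (r:ℤ)*((q:ℤ)*(G:ℤ)) = (q:ℤ)*(r:ℤ)*(G:ℤ) by ring]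
            exact h4
          exact prime_not_dvd_int hp hr (by omega) h5
    obtain ⟨k₁, j₁, hj₁2, hj₁p, hQ1⟩ := hexp
    rcases (H (k₁ - (j₁:ℤ) + 1)).2 with ⟨j₀, hj₀2, hj₀p, hQ0⟩ | hR
    · -- two Q points: contradiction
      have h4 := dvd_sub hQ0 hQ1
      rw [show (i + ((n/p:ℕ):ℤ)*(k₁ - (j₁:ℤ) + 1) - ((n/p:ℕ):ℤ)*(j₀:ℤ))
          - (i + ((n/p:ℕ):ℤ)*k₁ - ((n/p:ℕ):ℤ)*(j₁:ℤ))
          = ((n/p:ℕ):ℤ)*(1 - (j₀:ℤ)) by ring] at h4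
      rw [hNq, hNp] at h4
      have h5 : (p:ℤ) ∣ (q:ℤ)*(1 - (j₀:ℤ)) := by
        apply int_dvd_cancel (show ((r:ℤ)*(G:ℤ)) ≠ 0 by
          exact_mod_cast Nat.mul_ne_zero hr.pos.ne' hG0.ne')
        rw [show (p:ℤ)*((r:ℤ)*(G:ℤ)) = (p:ℤ)*(r:ℤ)*(G:ℤ) by ring,
            show (q:ℤ)*(1 - (j₀:ℤ))*((r:ℤ)*(G:ℤ)) = (q:ℤ)*(r:ℤ)*(G:ℤ)*(1 - (j₀:ℤ)) by ring]
        exact h4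
      rcases hPz.dvd_mul.mp h5 with h6 | h6
      · exact prime_not_dvd_int hp hq (by omega) h6
      · have h7 : (p:ℤ) ∣ ((j₀:ℤ) - 1) := by
          have h8 := dvd_neg.mpr h6
          rw [show -(1 - (j₀:ℤ)) = (j₀:ℤ) - 1 by ring] at h8
          exact h8
        have hj₀2' : (2:ℤ) ≤ (j₀:ℤ) := by exact_mod_cast hj₀2
        have hj₀p' : ((j₀:ℤ)) ≤ (p:ℤ) := by exact_mod_cast hj₀p
        have h9 : (p:ℤ) ≤ (j₀:ℤ) - 1 := Int.le_of_dvd (by omega) h7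
        omega
    · -- R point at k₁ - j₁ + 1
      have hDq : ((n/q:ℕ):ℤ) ∣ i + ((n/p:ℕ):ℤ)*(k₁ - (j₁:ℤ)) - ((n/q:ℕ):ℤ) := by
        have h4 := dvd_sub hQ1 (dvd_refl ((n/q:ℕ):ℤ))
        rw [show (i + ((n/p:ℕ):ℤ)*k₁ - ((n/p:ℕ):ℤ)*(j₁:ℤ)) - ((n/q:ℕ):ℤ)
            = i + ((n/p:ℕ):ℤ)*(k₁ - (j₁:ℤ)) - ((n/q:ℕ):ℤ) by ring] at h4
        exact h4
      have hDr : ((n/r:ℕ):ℤ) ∣ i + ((n/p:ℕ):ℤ)*(k₁ - (j₁:ℤ)) - ((n/q:ℕ):ℤ) := by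
        rw [show i + ((n/p:ℕ):ℤ)*(k₁ - (j₁:ℤ)) - ((n/q:ℕ):ℤ)
            = i + ((n/p:ℕ):ℤ)*(k₁ - (j₁:ℤ) + 1) - (((n/p:ℕ):ℤ) + ((n/q:ℕ):ℤ)) by ring]
        exact hR
      obtain ⟨a, ha⟩ := hDq
      obtain ⟨b, hb⟩ := hDr
      have h5 : (r:ℤ)*a*((p:ℤ)*(G:ℤ)) = (q:ℤ)*b*((p:ℤ)*(G:ℤ)) := by
        linear_combination hb - ha - a*hNq + b*hNr
      have h6 : (r:ℤ)*a = (q:ℤ)*b :=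
        mul_right_cancel₀ (show ((p:ℤ)*(G:ℤ)) ≠ 0 by
          exact_mod_cast Nat.mul_ne_zero hp.pos.ne' hG0.ne') h5
      have h7 : (q:ℤ) ∣ (r:ℤ)*a := ⟨b, h6⟩
      rcases hQz.dvd_mul.mp h7 with h8 | h8
      · exact prime_not_dvd_int hq hr (by omega) h8
      · obtain ⟨a', ha'⟩ := h8
        refine (H (k₁ - (j₁:ℤ))).1 ⟨(p:ℤ)*a', ?_⟩
        linear_combination ha + ((n/q:ℕ):ℤ)*ha' + ((q:ℤ)*a')*hNq - ((p:ℤ)*a')*hNp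
  · -- generic case: s ∉ {p, q, r}
    have hps : p ≠ s := fun h => hsp h.symm
    have hqs : q ≠ s := fun h => hsq h.symm
    have hrs : r ≠ s := fun h => hsr h.symm
    obtain ⟨G, hG⟩ : ∃ G : ℕ, n = p * q * r * s * G := by
      have h1 : p * q * r ∣ n := pqr_decomp hp hq hr hpn hqn hrn (by omega) (by omega) (by omega)
      have c1 : Nat.Coprime s p := (Nat.coprime_primes hs hp).mpr (fun h => hps h.symm)
      have c2 : Nat.Coprime s q := (Nat.coprime_primes hs hq).mpr (fun h => hqs h.symm)
      have c3 : Nat.Coprime s r := (Nat.coprime_primes hs hr).mpr (fun h => hrs h.symm)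
      have c4 : Nat.Coprime s (p * q * r) := Nat.Coprime.mul_right (Nat.Coprime.mul_right c1 c2) c3
      have h2 : s * (p * q * r) ∣ n := Nat.Coprime.mul_dvd_of_dvd_of_dvd c4 hsn h1
      refine ⟨n / (s * (p*q*r)), ?_⟩
      rw [show p*q*r*s*(n / (s*(p*q*r))) = s*(p*q*r)*(n / (s*(p*q*r))) by ring,
        Nat.mul_div_cancel' h2]
    have hG0 : 0 < G := by
      rcases Nat.eq_zero_or_pos G with h | h
      · rw [h, Nat.mul_zero] at hG; omega
      · exact h
    have hnp : n / p = q * r * s * G := by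
      rw [hG, show p*q*r*s*G = p*(q*r*s*G) by ring, Nat.mul_div_cancel_left _ hp.pos]
    have hnq : n / q = p * r * s * G := by
      rw [hG, show p*q*r*s*G = q*(p*r*s*G) by ring, Nat.mul_div_cancel_left _ hq.pos]
    have hnr : n / r = p * q * s * G := by
      rw [hG, show p*q*r*s*G = r*(p*q*s*G) by ring, Nat.mul_div_cancel_left _ hr.pos]
    have hns : n / s = p * q * r * G := by
      rw [hG, show p*q*r*s*G = s*(p*q*r*G) by ring, Nat.mul_div_cancel_left _ hs.pos]
    have hNp : ((n/p : ℕ) : ℤ) = (q:ℤ)*(r:ℤ)*(s:ℤ)*(G:ℤ) := by rw [hnp]; push_cast; ring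
    have hNq : ((n/q : ℕ) : ℤ) = (p:ℤ)*(r:ℤ)*(s:ℤ)*(G:ℤ) := by rw [hnq]; push_cast; ring
    have hNr : ((n/r : ℕ) : ℤ) = (p:ℤ)*(q:ℤ)*(s:ℤ)*(G:ℤ) := by rw [hnr]; push_cast; ring
    have hNs : ((n/s : ℕ) : ℤ) = (p:ℤ)*(q:ℤ)*(r:ℤ)*(G:ℤ) := by rw [hns]; push_cast; ring
    have hGz0 : ((G:ℕ):ℤ) ≠ 0 := by exact_mod_cast hG0.ne'
    have hSnotq : ¬ ((s:ℤ) ∣ (q:ℤ)) := prime_not_dvd_int hs hq (fun h => hqs h.symm)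
    have hSnotr : ¬ ((s:ℤ) ∣ (r:ℤ)) := prime_not_dvd_int hs hr (fun h => hrs h.symm)
    have hSnotp : ¬ ((s:ℤ) ∣ (p:ℤ)) := prime_not_dvd_int hs hp (fun h => hps h.symm)
    -- common divisor E = p*s*G of n/q and n/r
    have hEq : (p:ℤ)*(s:ℤ)*(G:ℤ) ∣ ((n/q:ℕ):ℤ) := by
      rw [hNq]; exact ⟨(r:ℤ), by ring⟩
    have hEr : (p:ℤ)*(s:ℤ)*(G:ℤ) ∣ ((n/r:ℕ):ℤ) := by
      rw [hNr]; exact ⟨(q:ℤ), by ring⟩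
    rcases (H 0).2 with ⟨j, h2, h3, hQ0⟩ | hR0
    · rcases (H 1).2 with ⟨j', h2', h3', hQ1⟩ | hR1
      · -- Q at 0 and 1
        have h4 := dvd_sub hQ1 hQ0
        rw [show (i + ((n/s:ℕ):ℤ)*1 - ((n/p:ℕ):ℤ)*(j':ℤ))
            - (i + ((n/s:ℕ):ℤ)*0 - ((n/p:ℕ):ℤ)*(j:ℤ))
            = ((n/s:ℕ):ℤ) + ((n/p:ℕ):ℤ)*((j:ℤ) - (j':ℤ)) by ring] at h4
        rw [hNq, hNs, hNp] at h4
        have h5 : (p:ℤ)*(s:ℤ) ∣ (q:ℤ)*((p:ℤ) + (s:ℤ)*((j:ℤ) - (j':ℤ))) := by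
          apply int_dvd_cancel (show ((r:ℤ)*(G:ℤ)) ≠ 0 by
            exact_mod_cast Nat.mul_ne_zero hr.pos.ne' hG0.ne')
          rw [show (p:ℤ)*(s:ℤ)*((r:ℤ)*(G:ℤ)) = (p:ℤ)*(r:ℤ)*(s:ℤ)*(G:ℤ) by ring,
              show (q:ℤ)*((p:ℤ) + (s:ℤ)*((j:ℤ) - (j':ℤ)))*((r:ℤ)*(G:ℤ))
                = (p:ℤ)*(q:ℤ)*(r:ℤ)*(G:ℤ) + (q:ℤ)*(r:ℤ)*(s:ℤ)*(G:ℤ)*((j:ℤ) - (j':ℤ)) by ring]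
          exact h4
        have h6 : (s:ℤ) ∣ (q:ℤ)*((p:ℤ) + (s:ℤ)*((j:ℤ)-(j':ℤ))) :=
          dvd_trans (dvd_mul_left (s:ℤ) (p:ℤ)) h5
        rcases hSz.dvd_mul.mp h6 with h7 | h7
        · exact hSnotq h7
        · have h8 : (s:ℤ) ∣ (p:ℤ) := by
            have h9 := dvd_sub h7 (dvd_mul_right (s:ℤ) ((j:ℤ)-(j':ℤ)))
            rw [show (p:ℤ) + (s:ℤ)*((j:ℤ)-(j':ℤ)) - (s:ℤ)*((j:ℤ)-(j':ℤ)) = (p:ℤ) by ring] at h9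
            exact h9
          exact hSnotp h8
      · -- Q at 0, R at 1
        have hA := hEq.trans hQ0
        have hB := hEr.trans hR1
        have h4 := dvd_sub hB hA
        rw [show (i + ((n/s:ℕ):ℤ)*1 - (((n/p:ℕ):ℤ) + ((n/q:ℕ):ℤ)))
            - (i + ((n/s:ℕ):ℤ)*0 - ((n/p:ℕ):ℤ)*(j:ℤ))
            = ((n/s:ℕ):ℤ) - ((n/p:ℕ):ℤ) - ((n/q:ℕ):ℤ) + ((n/p:ℕ):ℤ)*(j:ℤ) by ring] at h4
        rw [hNs, hNp, hNq] at h4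
        have h5 : (p:ℤ)*(s:ℤ) ∣ (r:ℤ)*((p:ℤ)*(q:ℤ) - (q:ℤ)*(s:ℤ) - (p:ℤ)*(s:ℤ) + (q:ℤ)*(s:ℤ)*(j:ℤ)) := by
          apply int_dvd_cancel hGz0
          rw [show (p:ℤ)*(s:ℤ)*(G:ℤ) = (p:ℤ)*(s:ℤ)*(G:ℤ) by ring,
              show (r:ℤ)*((p:ℤ)*(q:ℤ) - (q:ℤ)*(s:ℤ) - (p:ℤ)*(s:ℤ) + (q:ℤ)*(s:ℤ)*(j:ℤ))*(G:ℤ)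
                = (p:ℤ)*(q:ℤ)*(r:ℤ)*(G:ℤ) - (q:ℤ)*(r:ℤ)*(s:ℤ)*(G:ℤ) - (p:ℤ)*(r:ℤ)*(s:ℤ)*(G:ℤ)
                  + (q:ℤ)*(r:ℤ)*(s:ℤ)*(G:ℤ)*(j:ℤ) by ring]
          exact h4
        have h6 : (s:ℤ) ∣ (r:ℤ)*((p:ℤ)*(q:ℤ) - (q:ℤ)*(s:ℤ) - (p:ℤ)*(s:ℤ) + (q:ℤ)*(s:ℤ)*(j:ℤ)) :=
          dvd_trans (dvd_mul_left (s:ℤ) (p:ℤ)) h5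
        rcases hSz.dvd_mul.mp h6 with h7 | h7
        · exact hSnotr h7
        · have h8 : (s:ℤ) ∣ (p:ℤ)*(q:ℤ) := by
            have h9 := dvd_add h7 (dvd_mul_right (s:ℤ) ((q:ℤ) + (p:ℤ) - (q:ℤ)*(j:ℤ)))
            rw [show (p:ℤ)*(q:ℤ) - (q:ℤ)*(s:ℤ) - (p:ℤ)*(s:ℤ) + (q:ℤ)*(s:ℤ)*(j:ℤ)
                + (s:ℤ)*((q:ℤ) + (p:ℤ) - (q:ℤ)*(j:ℤ)) = (p:ℤ)*(q:ℤ) by ring] at h9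
            exact h9
          rcases hSz.dvd_mul.mp h8 with h9 | h9
          · exact hSnotp h9
          · exact hSnotq h9
    · rcases (H 1).2 with ⟨j', h2', h3', hQ1⟩ | hR1
      · -- R at 0, Q at 1
        have hA := hEr.trans hR0
        have hB := hEq.trans hQ1
        have h4 := dvd_sub hB hA
        rw [show (i + ((n/s:ℕ):ℤ)*1 - ((n/p:ℕ):ℤ)*(j':ℤ))
            - (i + ((n/s:ℕ):ℤ)*0 - (((n/p:ℕ):ℤ) + ((n/q:ℕ):ℤ)))
            = ((n/s:ℕ):ℤ) - ((n/p:ℕ):ℤ)*(j':ℤ) + ((n/p:ℕ):ℤ) + ((n/q:ℕ):ℤ) by ring] at h4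
        rw [hNs, hNp, hNq] at h4
        have h5 : (p:ℤ)*(s:ℤ) ∣ (r:ℤ)*((p:ℤ)*(q:ℤ) - (q:ℤ)*(s:ℤ)*(j':ℤ) + (q:ℤ)*(s:ℤ) + (p:ℤ)*(s:ℤ)) := by
          apply int_dvd_cancel hGz0
          rw [show (p:ℤ)*(s:ℤ)*(G:ℤ) = (p:ℤ)*(s:ℤ)*(G:ℤ) by ring,
              show (r:ℤ)*((p:ℤ)*(q:ℤ) - (q:ℤ)*(s:ℤ)*(j':ℤ) + (q:ℤ)*(s:ℤ) + (p:ℤ)*(s:ℤ))*(G:ℤ)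
                = (p:ℤ)*(q:ℤ)*(r:ℤ)*(G:ℤ) - (q:ℤ)*(r:ℤ)*(s:ℤ)*(G:ℤ)*(j':ℤ)
                  + (q:ℤ)*(r:ℤ)*(s:ℤ)*(G:ℤ) + (p:ℤ)*(r:ℤ)*(s:ℤ)*(G:ℤ) by ring]
          exact h4
        have h6 : (s:ℤ) ∣ (r:ℤ)*((p:ℤ)*(q:ℤ) - (q:ℤ)*(s:ℤ)*(j':ℤ) + (q:ℤ)*(s:ℤ) + (p:ℤ)*(s:ℤ)) :=
          dvd_trans (dvd_mul_left (s:ℤ) (p:ℤ)) h5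
        rcases hSz.dvd_mul.mp h6 with h7 | h7
        · exact hSnotr h7
        · have h8 : (s:ℤ) ∣ (p:ℤ)*(q:ℤ) := by
            have h9 := dvd_add h7 (dvd_mul_right (s:ℤ) ((q:ℤ)*(j':ℤ) - (q:ℤ) - (p:ℤ)))
            rw [show (p:ℤ)*(q:ℤ) - (q:ℤ)*(s:ℤ)*(j':ℤ) + (q:ℤ)*(s:ℤ) + (p:ℤ)*(s:ℤ)
                + (s:ℤ)*((q:ℤ)*(j':ℤ) - (q:ℤ) - (p:ℤ)) = (p:ℤ)*(q:ℤ) by ring] at h9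
            exact h9
          rcases hSz.dvd_mul.mp h8 with h9 | h9
          · exact hSnotp h9
          · exact hSnotq h9
      · -- R at 0 and 1
        have h4 := dvd_sub hR1 hR0
        rw [show (i + ((n/s:ℕ):ℤ)*1 - (((n/p:ℕ):ℤ) + ((n/q:ℕ):ℤ)))
            - (i + ((n/s:ℕ):ℤ)*0 - (((n/p:ℕ):ℤ) + ((n/q:ℕ):ℤ))) = ((n/s:ℕ):ℤ) by ring] at h4
        rw [hNr, hNs] at h4
        have h5 : (s:ℤ) ∣ (r:ℤ) := by
          apply int_dvd_cancel (show ((p:ℤ)*(q:ℤ)*(G:ℤ)) ≠ 0 by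
            exact_mod_cast Nat.mul_ne_zero (Nat.mul_ne_zero hp.pos.ne' hq.pos.ne') hG0.ne')
          rw [show (s:ℤ)*((p:ℤ)*(q:ℤ)*(G:ℤ)) = (p:ℤ)*(q:ℤ)*(s:ℤ)*(G:ℤ) by ring,
              show (r:ℤ)*((p:ℤ)*(q:ℤ)*(G:ℤ)) = (p:ℤ)*(q:ℤ)*(r:ℤ)*(G:ℤ) by ring]
          exact h4
        exact hSnotr h5


/-- If `n` has at least three distinct prime factors `p < q < r`, then the explicit vector
`α' = ∑_{j=2}^{p} v^(q)_{n_p j} + v^(r)_{n_p + n_q} − v^(p)_{n_q}` (indices mod the respective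
`n_d`) lies in `V_n ∩ (ℤ_{≥0})^n` but is not a `ℤ_{≥0}`-combination of the `v^(p')_i`. -/
theorem stmt6 (n : ℕ) (hn : 0 < n) (ζ : ℂ) (hζ : IsPrimitiveRoot ζ n)
    (p q r : ℕ) (hp : p.Prime) (hq : q.Prime) (hr : r.Prime)
    (hpn : p ∣ n) (hqn : q ∣ n) (hrn : r ∣ n) (hpq : p < q) (hqr : q < r)
    (α : Fin n → ℤ)
    (hα : α = ∑ j ∈ Finset.Icc 2 p, cycVec n q ((n / p * j) % (n / q))
        + cycVec n r ((n / p + n / q) % (n / r)) - cycVec n p ((n / q) % (n / p))) :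
    (∀ m : Fin n, 0 ≤ α m) ∧
    (∑ m : Fin n, (α m : ℂ) * ζ ^ (m : ℕ) = 0) ∧
    ¬ ∃ c : ℕ → ℕ → ℕ, α = ∑ p' ∈ n.primeFactors, ∑ i ∈ Finset.range (n / p'),
        (c p' i : ℤ) • cycVec n p' i := by
  have hNp0 : 0 < n / p := Nat.div_pos (Nat.le_of_dvd hn hpn) hp.pos
  have hNq0 : 0 < n / q := Nat.div_pos (Nat.le_of_dvd hn hqn) hq.pos
  have hNr0 : 0 < n / r := Nat.div_pos (Nat.le_of_dvd hn hrn) hr.pos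
  have hNppn : ((n/p : ℕ) : ℤ) * (p:ℤ) = (n:ℤ) := by
    exact_mod_cast congrArg (Nat.cast : ℕ → ℤ) (Nat.div_mul_cancel hpn)
  have hnqdvd : ((n/q : ℕ) : ℤ) ∣ (n:ℤ) := Int.natCast_dvd_natCast.mpr (Nat.div_dvd_of_dvd hqn)
  have hnrdvd : ((n/r : ℕ) : ℤ) ∣ (n:ℤ) := Int.natCast_dvd_natCast.mpr (Nat.div_dvd_of_dvd hrn)
  have hnpdvd : ((n/p : ℕ) : ℤ) ∣ (n:ℤ) := Int.natCast_dvd_natCast.mpr (Nat.div_dvd_of_dvd hpn)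
  -- entry formula
  have hαm : ∀ m : Fin n, α m =
      (∑ j ∈ Finset.Icc 2 p, if (m:ℕ) % (n/q) = (n/p * j) % (n/q) then (1:ℤ) else 0)
      + (if (m:ℕ) % (n/r) = (n/p + n/q) % (n/r) then 1 else 0)
      - (if (m:ℕ) % (n/p) = (n/q) % (n/p) then 1 else 0) := by
    intro m
    rw [hα, Pi.sub_apply, Pi.add_apply, Finset.sum_apply]
    congr 1
    congr 1
    · refine Finset.sum_congr rfl fun j _ => ?_
      rw [cycVec_apply hqn hn (Nat.mod_lt _ hNq0) m]
    · rw [cycVec_apply hrn hn (Nat.mod_lt _ hNr0) m]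
    · rw [cycVec_apply hpn hn (Nat.mod_lt _ hNp0) m]
  have hite_nonneg : ∀ (P : Prop) [Decidable P], (0:ℤ) ≤ if P then 1 else 0 := by
    intro P _; split <;> norm_num
  refine ⟨?_, ?_, ?_⟩
  · -- Part 1: nonnegativity
    intro m
    rw [hαm m]
    by_cases hC : (m:ℕ) % (n/p) = (n/q) % (n/p)
    · rw [if_pos hC]
      obtain ⟨z, hz⟩ := (modiff _ _ _).mp hC
      obtain ⟨w, hw, hk0, hkp⟩ : ∃ w : ℤ, z = (p:ℤ) * w + z % (p:ℤ) ∧ 0 ≤ z % (p:ℤ)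
          ∧ z % (p:ℤ) < (p:ℤ) := by
        refine ⟨z / (p:ℤ), ?_, Int.emod_nonneg z (by exact_mod_cast hp.pos.ne'),
          Int.emod_lt_of_pos z (by exact_mod_cast hp.pos)⟩
        rw [Int.mul_ediv_add_emod]
      set k : ℤ := z % (p:ℤ) with hkdef
      have hm : ((m:ℕ) : ℤ) = ((n/q:ℕ):ℤ) + ((n/p:ℕ):ℤ) * k + (n:ℤ) * w := by
        linear_combination hz + ((n/p:ℕ):ℤ) * hw + w * hNppn
      have hBnn : (0:ℤ) ≤ if (m:ℕ) % (n/r) = (n/p + n/q) % (n/r) then 1 else 0 := hite_nonneg _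
      have hAnn : ∀ j ∈ Finset.Icc 2 p,
          (0:ℤ) ≤ if (m:ℕ) % (n/q) = (n/p * j) % (n/q) then (1:ℤ) else 0 :=
        fun j _ => hite_nonneg _
      rcases eq_or_lt_of_le hk0 with hk1 | hk1
      · -- k = 0 : j = p works
        have hterm : (if (m:ℕ) % (n/q) = (n/p * p) % (n/q) then (1:ℤ) else 0) = 1 := by
          rw [if_pos]
          rw [modiff, Nat.cast_mul]
          rw [show ((m:ℕ):ℤ) - ((n/p:ℕ):ℤ)*(p:ℤ)
              = ((n/q:ℕ):ℤ) + (n:ℤ)*(w - 1) by linear_combination hm - hNppn - ((n/p:ℕ):ℤ)*hk1]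
          exact dvd_add (dvd_refl _) (hnqdvd.mul_right _)
        have hA : (1:ℤ) ≤ ∑ j ∈ Finset.Icc 2 p,
            if (m:ℕ) % (n/q) = (n/p * j) % (n/q) then (1:ℤ) else 0 :=
          le_trans (le_of_eq hterm.symm)
            (Finset.single_le_sum hAnn (Finset.mem_Icc.mpr ⟨hp.two_le, le_refl p⟩))
        linarith
      · rcases eq_or_lt_of_le (show (1:ℤ) ≤ k by omega) with hk2 | hk2
        · -- k = 1 : r-term works
          have hterm : (if (m:ℕ) % (n/r) = (n/p + n/q) % (n/r) then (1:ℤ) else 0) = 1 := by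
            rw [if_pos]
            rw [modiff, Nat.cast_add]
            rw [show ((m:ℕ):ℤ) - (((n/p:ℕ):ℤ) + ((n/q:ℕ):ℤ))
                = (n:ℤ)*w by linear_combination hm - ((n/p:ℕ):ℤ)*hk2]
            exact hnrdvd.mul_right _
          have hA : (0:ℤ) ≤ ∑ j ∈ Finset.Icc 2 p,
              if (m:ℕ) % (n/q) = (n/p * j) % (n/q) then (1:ℤ) else 0 :=
            Finset.sum_nonneg hAnn
          linarith
        · -- 2 ≤ k < p : j = k works
          have hk2' : (2:ℤ) ≤ k := by omega
          set j : ℕ := k.toNat with hjdef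
          have hjk : ((j:ℕ):ℤ) = k := Int.toNat_of_nonneg hk0
          have hjmem : j ∈ Finset.Icc 2 p := by
            rw [Finset.mem_Icc]
            constructor
            · omega
            · have : ((j:ℕ):ℤ) < (p:ℤ) := by rw [hjk]; exact hkp
              exact_mod_cast le_of_lt this
          have hterm : (if (m:ℕ) % (n/q) = (n/p * j) % (n/q) then (1:ℤ) else 0) = 1 := by
            rw [if_pos]
            rw [modiff, Nat.cast_mul]
            rw [show ((m:ℕ):ℤ) - ((n/p:ℕ):ℤ)*(j:ℤ)
                = ((n/q:ℕ):ℤ) + (n:ℤ)*w by linear_combination hm - ((n/p:ℕ):ℤ)*hjk]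
            exact dvd_add (dvd_refl _) (hnqdvd.mul_right _)
          have hA : (1:ℤ) ≤ ∑ j' ∈ Finset.Icc 2 p,
              if (m:ℕ) % (n/q) = (n/p * j') % (n/q) then (1:ℤ) else 0 :=
            le_trans (le_of_eq hterm.symm) (Finset.single_le_sum hAnn hjmem)
          linarith
    · rw [if_neg hC, sub_zero]
      have hA : (0:ℤ) ≤ ∑ j ∈ Finset.Icc 2 p,
          if (m:ℕ) % (n/q) = (n/p * j) % (n/q) then (1:ℤ) else 0 :=
        Finset.sum_nonneg fun j _ => hite_nonneg _
      have hB := hite_nonneg ((m:ℕ) % (n/r) = (n/p + n/q) % (n/r))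
      linarith
  · -- Part 2: vanishing sum
    have key : ∀ (d i : ℕ), d ∣ n → 1 < d →
        ∑ m : Fin n, ((cycVec n d (i % (n/d)) m : ℤ) : ℂ) * ζ ^ (m:ℕ) = 0 := by
      intro d i hd hd1
      have hnd0 : 0 < n / d := Nat.div_pos (Nat.le_of_dvd hn hd) (by omega)
      exact cycVec_root_sum hd hd1 hn hζ (Nat.mod_lt _ hnd0)
    have hsplit : ∀ m : Fin n, (α m : ℂ) * ζ ^ (m:ℕ) =
        (∑ j ∈ Finset.Icc 2 p, ((cycVec n q ((n / p * j) % (n / q)) m : ℤ) : ℂ) * ζ ^ (m:ℕ))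
        + ((cycVec n r ((n / p + n / q) % (n / r)) m : ℤ) : ℂ) * ζ ^ (m:ℕ)
        - ((cycVec n p ((n / q) % (n / p)) m : ℤ) : ℂ) * ζ ^ (m:ℕ) := by
      intro m
      rw [hα, Pi.sub_apply, Pi.add_apply, Finset.sum_apply]
      push_cast
      rw [sub_mul, add_mul, Finset.sum_mul]
    rw [Finset.sum_congr rfl fun m _ => hsplit m]
    rw [Finset.sum_sub_distrib, Finset.sum_add_distrib]
    rw [Finset.sum_comm]
    rw [Finset.sum_congr rfl fun j (_ : j ∈ Finset.Icc 2 p) => key q (n/p*j) hqn hq.one_lt]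
    rw [key r (n/p + n/q) hrn hr.one_lt, key p (n/q) hpn hp.one_lt]
    simp
  · -- Part 3: not a nonnegative combination
    rintro ⟨c, hc⟩
    have hsum_apply : ∀ m : Fin n, α m = ∑ s ∈ n.primeFactors, ∑ i' ∈ Finset.range (n/s),
        (c s i' : ℤ) * cycVec n s i' m := by
      intro m
      rw [hc, Finset.sum_apply]
      refine Finset.sum_congr rfl fun s _ => ?_
      rw [Finset.sum_apply]
      refine Finset.sum_congr rfl fun i' _ => ?_
      rw [Pi.smul_apply, smul_eq_mul]
    -- decomposition n = p*q*r*G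
    obtain ⟨G, hG⟩ : ∃ G : ℕ, n = p * q * r * G := ⟨n / (p*q*r), by
      rw [Nat.mul_div_cancel' (pqr_decomp hp hq hr hpn hqn hrn (by omega) (by omega) (by omega))]⟩
    have hG0 : 0 < G := by
      rcases Nat.eq_zero_or_pos G with h | h
      · rw [h, Nat.mul_zero] at hG; omega
      · exact h
    have hnp : n / p = q * r * G := by
      rw [hG, show p*q*r*G = p*(q*r*G) by ring, Nat.mul_div_cancel_left _ hp.pos]
    have hnq : n / q = p * r * G := by
      rw [hG, show p*q*r*G = q*(p*r*G) by ring, Nat.mul_div_cancel_left _ hq.pos]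
    have hnr : n / r = p * q * G := by
      rw [hG, show p*q*r*G = r*(p*q*G) by ring, Nat.mul_div_cancel_left _ hr.pos]
    have hNpz : ((n/p : ℕ) : ℤ) = (q:ℤ)*(r:ℤ)*(G:ℤ) := by rw [hnp]; push_cast; ring
    have hNqz : ((n/q : ℕ) : ℤ) = (p:ℤ)*(r:ℤ)*(G:ℤ) := by rw [hnq]; push_cast; ring
    have hNrz : ((n/r : ℕ) : ℤ) = (p:ℤ)*(q:ℤ)*(G:ℤ) := by rw [hnr]; push_cast; ring
    have hPz : Prime ((p:ℕ):ℤ) := Nat.prime_iff_prime_int.mp hp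
    have hrG0 : ((r:ℤ)*(G:ℤ)) ≠ 0 := by
      exact_mod_cast Nat.mul_ne_zero hr.pos.ne' hG0.ne'
    have hqG0 : ((q:ℤ)*(G:ℤ)) ≠ 0 := by
      exact_mod_cast Nat.mul_ne_zero hq.pos.ne' hG0.ne'
    have hcancelP_q : ∀ t : ℤ, ((n/q:ℕ):ℤ) ∣ ((n/p:ℕ):ℤ) * t → (p:ℤ) ∣ t := by
      intro t ht
      rw [hNqz, hNpz] at ht
      have h5 : (p:ℤ) ∣ (q:ℤ)*t := by
        apply int_dvd_cancel hrG0
        rw [show (p:ℤ)*((r:ℤ)*(G:ℤ)) = (p:ℤ)*(r:ℤ)*(G:ℤ) by ring,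
            show (q:ℤ)*t*((r:ℤ)*(G:ℤ)) = (q:ℤ)*(r:ℤ)*(G:ℤ)*t by ring]
        exact ht
      rcases hPz.dvd_mul.mp h5 with h | h
      · exact absurd h (prime_not_dvd_int hp hq (by omega))
      · exact h
    have hcancelP_r : ∀ t : ℤ, ((n/r:ℕ):ℤ) ∣ ((n/p:ℕ):ℤ) * t → (p:ℤ) ∣ t := by
      intro t ht
      rw [hNrz, hNpz] at ht
      have h5 : (p:ℤ) ∣ (r:ℤ)*t := by
        apply int_dvd_cancel hqG0
        rw [show (p:ℤ)*((q:ℤ)*(G:ℤ)) = (p:ℤ)*(q:ℤ)*(G:ℤ) by ring,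
            show (r:ℤ)*t*((q:ℤ)*(G:ℤ)) = (q:ℤ)*(r:ℤ)*(G:ℤ)*t by ring]
        exact ht
      rcases hPz.dvd_mul.mp h5 with h | h
      · exact absurd h (prime_not_dvd_int hp hr (by omega))
      · exact h
    -- the special point with positive entry
    have hm₀lt : 2 * (n/p) % n < n := Nat.mod_lt _ hn
    have hαm₀ : (1:ℤ) ≤ α ⟨2 * (n/p) % n, hm₀lt⟩ := by
      rw [hαm ⟨2 * (n/p) % n, hm₀lt⟩]
      have hval : ((⟨2 * (n/p) % n, hm₀lt⟩ : Fin n) : ℕ) = 2 * (n/p) % n := rfl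
      have hterm2 : (if ((⟨2 * (n/p) % n, hm₀lt⟩ : Fin n) : ℕ) % (n/q)
          = (n/p * 2) % (n/q) then (1:ℤ) else 0) = 1 := by
        rw [if_pos]
        rw [hval, Nat.mod_mod_of_dvd _ (Nat.div_dvd_of_dvd hqn), Nat.mul_comm]
      have hC0 : ¬ (((⟨2 * (n/p) % n, hm₀lt⟩ : Fin n) : ℕ) % (n/p) = (n/q) % (n/p)) := by
        rw [hval, Nat.mod_mod_of_dvd _ (Nat.div_dvd_of_dvd hpn)]
        intro h
        have h0 : 2 * (n/p) % (n/p) = 0 := Nat.mul_mod_left 2 (n/p)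
        rw [h0] at h
        have hdvd : (n/p) ∣ (n/q) := Nat.dvd_of_mod_eq_zero h.symm
        rw [hnp, hnq] at hdvd
        rw [show q*r*G = q*(r*G) by ring, show p*r*G = p*(r*G) by ring] at hdvd
        have : q ∣ p := (Nat.mul_dvd_mul_iff_right (Nat.mul_pos hr.pos hG0)).mp hdvd
        have := Nat.le_of_dvd hp.pos this
        omega
      have hA : (1:ℤ) ≤ ∑ j ∈ Finset.Icc 2 p,
          if ((⟨2 * (n/p) % n, hm₀lt⟩ : Fin n) : ℕ) % (n/q) = (n/p * j) % (n/q)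
          then (1:ℤ) else 0 :=
        le_trans (le_of_eq hterm2.symm)
          (Finset.single_le_sum (fun j _ => hite_nonneg _)
            (Finset.mem_Icc.mpr ⟨le_refl 2, hp.two_le⟩))
      have hB := hite_nonneg (((⟨2 * (n/p) % n, hm₀lt⟩ : Fin n) : ℕ) % (n/r)
          = (n/p + n/q) % (n/r))
      rw [if_neg hC0, sub_zero]
      linarith
    -- find a generator with positive coefficient
    have hex : ∃ s ∈ n.primeFactors, ∃ i' ∈ Finset.range (n/s), c s i' ≠ 0 := by
      by_contra hall
      push_neg at hall
      have h0 : α ⟨2 * (n/p) % n, hm₀lt⟩ = 0 := by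
        rw [hsum_apply]
        refine Finset.sum_eq_zero fun s hsmem => Finset.sum_eq_zero fun i' hi'mem => ?_
        rw [hall s hsmem i' hi'mem]
        norm_num
      rw [h0] at hαm₀
      norm_num at hαm₀
    obtain ⟨s, hsmem, i, himem, hcne⟩ := hex
    have hs : s.Prime := Nat.prime_of_mem_primeFactors hsmem
    have hsn : s ∣ n := Nat.dvd_of_mem_primeFactors hsmem
    have hilt : i < n/s := Finset.mem_range.mp himem
    have hNssn : ((n/s:ℕ):ℤ) * (s:ℤ) = (n:ℤ) := by
      exact_mod_cast congrArg (Nat.cast : ℕ → ℤ) (Nat.div_mul_cancel hsn)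
    have hc1 : (1:ℤ) ≤ (c s i : ℤ) := by
      exact_mod_cast Nat.one_le_iff_ne_zero.mpr hcne
    -- every coset point has a positive entry
    have hcoset : ∀ k : ℕ, k < s → ∀ (hx : i + (n/s)*k < n),
        1 ≤ α ⟨i + (n/s)*k, hx⟩ := by
      intro k hk hx
      have hcyc : cycVec n s i ⟨i + (n/s)*k, hx⟩ = 1 := by
        rw [cycVec_apply hsn hn hilt]
        rw [if_pos]
        show (i + (n/s)*k) % (n/s) = i
        rw [Nat.add_mul_mod_self_left, Nat.mod_eq_of_lt hilt]
      calc (1:ℤ) ≤ (c s i : ℤ) * cycVec n s i ⟨i + (n/s)*k, hx⟩ := by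
            rw [hcyc, mul_one]; exact hc1
        _ ≤ ∑ i' ∈ Finset.range (n/s), (c s i' : ℤ) * cycVec n s i' ⟨i + (n/s)*k, hx⟩ :=
            Finset.single_le_sum
              (fun i' _ => mul_nonneg (Int.natCast_nonneg _) (cycVec_nonneg _ _ _ _)) himem
        _ ≤ ∑ s' ∈ n.primeFactors, ∑ i' ∈ Finset.range (n/s'),
              (c s' i' : ℤ) * cycVec n s' i' ⟨i + (n/s)*k, hx⟩ :=
            Finset.single_le_sum
              (fun s' _ => Finset.sum_nonneg fun i' _ =>
                mul_nonneg (Int.natCast_nonneg _) (cycVec_nonneg _ _ _ _)) hsmem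
        _ = α ⟨i + (n/s)*k, hx⟩ := (hsum_apply _).symm
    -- per-point divisibility facts
    have Fk : ∀ k : ℕ, k < s →
        ¬ (((n/p:ℕ):ℤ) ∣ ((i:ℤ) + ((n/s:ℕ):ℤ)*(k:ℤ) - ((n/q:ℕ):ℤ))) ∧
        ((∃ j : ℕ, 2 ≤ j ∧ j ≤ p ∧
            ((n/q:ℕ):ℤ) ∣ ((i:ℤ) + ((n/s:ℕ):ℤ)*(k:ℤ) - ((n/p:ℕ):ℤ)*(j:ℤ))) ∨
          ((n/r:ℕ):ℤ) ∣ ((i:ℤ) + ((n/s:ℕ):ℤ)*(k:ℤ) - (((n/p:ℕ):ℤ) + ((n/q:ℕ):ℤ)))) := by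
      intro k hk
      have hxlt : i + (n/s)*k < n := by
        have h1 : i + (n/s)*k < (n/s)*(k+1) := by
          have := hilt; nlinarith
        have h2 : (n/s)*(k+1) ≤ (n/s)*s := Nat.mul_le_mul_left _ (by omega)
        have h3 : (n/s)*s = n := Nat.div_mul_cancel hsn
        omega
      have h1le := hcoset k hk hxlt
      rw [hαm ⟨i + (n/s)*k, hxlt⟩] at h1le
      have h1le' : (1:ℤ) ≤
          (∑ j ∈ Finset.Icc 2 p,
            if (i + (n/s)*k) % (n/q) = (n/p * j) % (n/q) then (1:ℤ) else 0)
          + (if (i + (n/s)*k) % (n/r) = (n/p + n/q) % (n/r) then 1 else 0)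
          - (if (i + (n/s)*k) % (n/p) = (n/q) % (n/p) then 1 else 0) := h1le
      have castval : ((i + (n/s)*k : ℕ) : ℤ) = (i:ℤ) + ((n/s:ℕ):ℤ)*(k:ℤ) := by
        push_cast; ring
      have bQ : ∀ j : ℕ, ((i + (n/s)*k) % (n/q) = (n/p*j) % (n/q)) ↔
          (((n/q:ℕ):ℤ) ∣ ((i:ℤ) + ((n/s:ℕ):ℤ)*(k:ℤ) - ((n/p:ℕ):ℤ)*(j:ℤ))) := by
        intro j; rw [modiff, castval, Nat.cast_mul]
      have bR : ((i + (n/s)*k) % (n/r) = (n/p + n/q) % (n/r)) ↔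
          (((n/r:ℕ):ℤ) ∣ ((i:ℤ) + ((n/s:ℕ):ℤ)*(k:ℤ) - (((n/p:ℕ):ℤ) + ((n/q:ℕ):ℤ)))) := by
        rw [modiff, castval, Nat.cast_add]
      have bC : ((i + (n/s)*k) % (n/p) = (n/q) % (n/p)) ↔
          (((n/p:ℕ):ℤ) ∣ ((i:ℤ) + ((n/s:ℕ):ℤ)*(k:ℤ) - ((n/q:ℕ):ℤ))) := by
        rw [modiff, castval]
      have huniq : ∀ j j' : ℕ, 2 ≤ j → j ≤ p → 2 ≤ j' → j' ≤ p →
          (((n/q:ℕ):ℤ) ∣ ((i:ℤ) + ((n/s:ℕ):ℤ)*(k:ℤ) - ((n/p:ℕ):ℤ)*(j:ℤ))) →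
          (((n/q:ℕ):ℤ) ∣ ((i:ℤ) + ((n/s:ℕ):ℤ)*(k:ℤ) - ((n/p:ℕ):ℤ)*(j':ℤ))) → j = j' := by
        intro j j' hj2 hjp hj'2 hj'p hdj hdj'
        have h4 := dvd_sub hdj hdj'
        rw [show ((i:ℤ) + ((n/s:ℕ):ℤ)*(k:ℤ) - ((n/p:ℕ):ℤ)*(j:ℤ))
            - ((i:ℤ) + ((n/s:ℕ):ℤ)*(k:ℤ) - ((n/p:ℕ):ℤ)*(j':ℤ))
            = ((n/p:ℕ):ℤ) * ((j':ℤ) - (j:ℤ)) by ring] at h4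
        obtain ⟨t, ht⟩ := hcancelP_q _ h4
        have hj2' : (2:ℤ) ≤ (j:ℤ) := by exact_mod_cast hj2
        have hjp' : ((j:ℕ):ℤ) ≤ (p:ℤ) := by exact_mod_cast hjp
        have hj'2' : (2:ℤ) ≤ (j':ℤ) := by exact_mod_cast hj'2
        have hj'p' : ((j':ℕ):ℤ) ≤ (p:ℤ) := by exact_mod_cast hj'p
        have hp0 : (0:ℤ) < (p:ℤ) := by exact_mod_cast hp.pos
        have ht0 : t = 0 := by
          rcases lt_trichotomy t 0 with h | h | h
          · have h5 : t ≤ -1 := by omega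
            have h6 : (p:ℤ)*t ≤ (p:ℤ)*(-1) := mul_le_mul_of_nonneg_left h5 (le_of_lt hp0)
            omega
          · exact h
          · have h5 : (1:ℤ) ≤ t := by omega
            have h6 : (p:ℤ)*1 ≤ (p:ℤ)*t := mul_le_mul_of_nonneg_left h5 (le_of_lt hp0)
            omega
        rw [ht0, mul_zero] at ht
        have : ((j:ℕ):ℤ) = ((j':ℕ):ℤ) := by omega
        exact_mod_cast this
      have hexcl : (((n/p:ℕ):ℤ) ∣ ((i:ℤ) + ((n/s:ℕ):ℤ)*(k:ℤ) - ((n/q:ℕ):ℤ))) →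
          (((n/r:ℕ):ℤ) ∣ ((i:ℤ) + ((n/s:ℕ):ℤ)*(k:ℤ) - (((n/p:ℕ):ℤ) + ((n/q:ℕ):ℤ)))) →
          ∀ j : ℕ, 2 ≤ j → j ≤ p →
          ¬ (((n/q:ℕ):ℤ) ∣ ((i:ℤ) + ((n/s:ℕ):ℤ)*(k:ℤ) - ((n/p:ℕ):ℤ)*(j:ℤ))) := by
        intro hCd hBd j hj2 hjp hQd
        obtain ⟨t, ht⟩ := hCd
        have h1 : ((n/r:ℕ):ℤ) ∣ ((n/p:ℕ):ℤ) * (t - 1) := by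
          rw [show ((n/p:ℕ):ℤ)*(t-1)
              = (i:ℤ) + ((n/s:ℕ):ℤ)*(k:ℤ) - (((n/p:ℕ):ℤ) + ((n/q:ℕ):ℤ)) by
            linear_combination -ht]
          exact hBd
        have h2 := hcancelP_r _ h1
        have h3 : ((n/q:ℕ):ℤ) ∣ ((n/p:ℕ):ℤ) * (t - (j:ℤ)) := by
          rw [show ((n/p:ℕ):ℤ)*(t - (j:ℤ))
              = ((i:ℤ) + ((n/s:ℕ):ℤ)*(k:ℤ) - ((n/p:ℕ):ℤ)*(j:ℤ)) - ((n/q:ℕ):ℤ)*1 by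
            linear_combination -ht]
          exact dvd_sub hQd (dvd_mul_right _ _)
        have h4 := hcancelP_q _ h3
        have h5 : (p:ℤ) ∣ ((j:ℤ) - 1) := by
          have h6 := dvd_sub h2 h4
          rw [show (t-1) - (t-(j:ℤ)) = (j:ℤ) - 1 by ring] at h6
          exact h6
        have hj2' : (2:ℤ) ≤ (j:ℤ) := by exact_mod_cast hj2
        have hjp' : ((j:ℕ):ℤ) ≤ (p:ℤ) := by exact_mod_cast hjp
        have h7 := Int.le_of_dvd (by omega) h5
        omega
      have hCfalse : ¬ ((i + (n/s)*k) % (n/p) = (n/q) % (n/p)) := by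
        intro hCN
        have hCd := bC.mp hCN
        by_cases hRN : (i + (n/s)*k) % (n/r) = (n/p + n/q) % (n/r)
        · have hBd := bR.mp hRN
          have hA0 : (∑ j ∈ Finset.Icc 2 p,
              if (i + (n/s)*k) % (n/q) = (n/p * j) % (n/q) then (1:ℤ) else 0) = 0 := by
            refine Finset.sum_eq_zero fun j hj => ?_
            rw [Finset.mem_Icc] at hj
            rw [if_neg]
            intro hQN
            exact hexcl hCd hBd j hj.1 hj.2 ((bQ j).mp hQN)
          rw [hA0, if_pos hRN, if_pos hCN] at h1le'
          norm_num at h1le'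
        · have hA1 : (∑ j ∈ Finset.Icc 2 p,
              if (i + (n/s)*k) % (n/q) = (n/p * j) % (n/q) then (1:ℤ) else 0) ≤ 1 := by
            by_cases hA : ∃ j₀ ∈ Finset.Icc 2 p,
                (i + (n/s)*k) % (n/q) = (n/p*j₀) % (n/q)
            · obtain ⟨j₀, hj₀mem, hj₀⟩ := hA
              have heq : (∑ j ∈ Finset.Icc 2 p,
                  if (i + (n/s)*k) % (n/q) = (n/p * j) % (n/q) then (1:ℤ) else 0)
                  = (if (i + (n/s)*k) % (n/q) = (n/p * j₀) % (n/q) then (1:ℤ) else 0) := by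
                refine Finset.sum_eq_single_of_mem j₀ hj₀mem fun j hjmem hne => ?_
                rw [if_neg]
                intro hQN
                rw [Finset.mem_Icc] at hjmem hj₀mem
                exact hne (huniq j j₀ hjmem.1 hjmem.2 hj₀mem.1 hj₀mem.2
                  ((bQ j).mp hQN) ((bQ j₀).mp hj₀))
              rw [heq]
              split <;> norm_num
            · push_neg at hA
              rw [Finset.sum_eq_zero (fun j hj => if_neg (hA j hj))]
              norm_num
          rw [if_neg hRN, if_pos hCN] at h1le'
          linarith
      refine ⟨fun hCd => hCfalse (bC.mpr hCd), ?_⟩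
      rw [if_neg hCfalse, sub_zero] at h1le'
      by_cases hRN : (i + (n/s)*k) % (n/r) = (n/p + n/q) % (n/r)
      · exact Or.inr (bR.mp hRN)
      · left
        rw [if_neg hRN, add_zero] at h1le'
        by_contra hno
        push_neg at hno
        have hA0 : (∑ j ∈ Finset.Icc 2 p,
            if (i + (n/s)*k) % (n/q) = (n/p * j) % (n/q) then (1:ℤ) else 0) = 0 := by
          refine Finset.sum_eq_zero fun j hj => ?_
          rw [Finset.mem_Icc] at hj
          rw [if_neg]
          intro hQN
          exact hno j hj.1 hj.2 ((bQ j).mp hQN)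
        rw [hA0] at h1le'
        norm_num at h1le'
    -- extend to all integers
    have H : ∀ z : ℤ,
        ¬ (((n / p : ℕ) : ℤ) ∣ ((i:ℤ) + ((n / s : ℕ) : ℤ) * z - ((n / q : ℕ) : ℤ))) ∧
        ((∃ j : ℕ, 2 ≤ j ∧ j ≤ p ∧
            ((n / q : ℕ) : ℤ) ∣ ((i:ℤ) + ((n / s : ℕ) : ℤ) * z - ((n / p : ℕ) : ℤ) * (j:ℤ))) ∨
          ((n / r : ℕ) : ℤ) ∣ ((i:ℤ) + ((n / s : ℕ) : ℤ) * z
            - (((n / p : ℕ) : ℤ) + ((n / q : ℕ) : ℤ)))) := by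
      intro z
      have hsz0 : (0:ℤ) < (s:ℤ) := by exact_mod_cast hs.pos
      have hkz : (((z % (s:ℤ)).toNat : ℕ) : ℤ) = z % (s:ℤ) :=
        Int.toNat_of_nonneg (Int.emod_nonneg z hsz0.ne')
      have hks : (z % (s:ℤ)).toNat < s := by
        have h1 := Int.emod_lt_of_pos z hsz0
        omega
      have hdiff : ∀ cc : ℤ, (i:ℤ) + ((n/s:ℕ):ℤ)*z - cc
          = ((i:ℤ) + ((n/s:ℕ):ℤ)*(((z % (s:ℤ)).toNat : ℕ):ℤ) - cc) + (n:ℤ)*(z / (s:ℤ)) := by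
        intro cc
        have hde := Int.mul_ediv_add_emod z (s:ℤ)
        linear_combination (z / (s:ℤ))*hNssn - ((n/s:ℕ):ℤ)*hde - ((n/s:ℕ):ℤ)*hkz
      obtain ⟨hC', hQR'⟩ := Fk (z % (s:ℤ)).toNat hks
      refine ⟨fun hdvd => hC' ?_, ?_⟩
      · rw [hdiff] at hdvd
        exact (dvd_shift hnpdvd).mp hdvd
      · rcases hQR' with ⟨j, h2, h3, hj⟩ | hr'
        · exact Or.inl ⟨j, h2, h3, by rw [hdiff]; exact (dvd_shift hnqdvd).mpr hj⟩
        · exact Or.inr (by rw [hdiff]; exact (dvd_shift hnrdvd).mpr hr')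
    exact no_coset hn hp hq hr hs hpn hqn hrn hsn hpq hqr (i:ℤ) H
end

section
/- Let n have exactly one prime factor p (i.e., n = p^l with l ≥ 1). Then every α ∈ V_n ∩ (ℤ_{≥0})^n can be written as Σ_{i=0}^{n_p - 1} c_i v^(p)_i with non-negative integers c_i; in fact c_i = α_i. -/
open Finset Polynomial

lemma rep_unique {a i1 i2 j1 j2 : ℕ} (h1 : i1 < a) (h2 : i2 < a)
    (h : i1 + a * j1 = i2 + a * j2) : i1 = i2 ∧ j1 = j2 := by
  have ha : 0 < a := Nat.pos_of_ne_zero (by omega)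
  have hm := congrArg (· % a) h
  simp only [Nat.add_mul_mod_self_left, Nat.mod_eq_of_lt h1, Nat.mod_eq_of_lt h2] at hm
  subst hm
  have : a * j1 = a * j2 := by omega
  exact ⟨rfl, Nat.eq_of_mul_eq_mul_left ha this⟩

lemma sum_range_mul_eq {M : Type*} [AddCommMonoid M] {a : ℕ} (ha : 0 < a) (b : ℕ)
    (f : ℕ → M) :
    ∑ k ∈ Finset.range (a * b), f k
      = ∑ j ∈ Finset.range b, ∑ i ∈ Finset.range a, f (i + a * j) := by
  rw [← Finset.sum_product']
  refine Finset.sum_nbij' (fun k => (k / a, k % a)) (fun x => x.2 + a * x.1) ?_ ?_ ?_ ?_ ?_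
  · intro k hk
    simp only [Finset.mem_range] at hk
    simp only [Finset.mem_product, Finset.mem_range]
    exact ⟨Nat.div_lt_of_lt_mul (by omega), Nat.mod_lt _ ha⟩
  · intro x hx
    simp only [Finset.mem_product, Finset.mem_range] at hx
    simp only [Finset.mem_range]
    calc x.2 + a * x.1 < a * (x.1 + 1) := by ring_nf; omega
      _ ≤ a * b := Nat.mul_le_mul_left a hx.1
  · intro k _
    exact Nat.mod_add_div k a
  · intro x hx
    simp only [Finset.mem_product, Finset.mem_range] at hx
    have h1 : (x.2 + a * x.1) / a = x.1 := by
      rw [Nat.add_mul_div_left _ _ ha, Nat.div_eq_of_lt hx.2, Nat.zero_add]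
    have h2 : (x.2 + a * x.1) % a = x.2 := by
      rw [Nat.add_mul_mod_self_left, Nat.mod_eq_of_lt hx.2]
    exact Prod.ext h1 h2
  · intro k _
    simp only [Nat.mod_add_div k a]

/-- If `n = p^l` is a prime power, every `α ∈ V_n ∩ (ℤ_{≥0})^n` is a `ℤ_{≥0}`-combination
`∑_{i<n_p} c_i v^(p)_i`, with in fact `c_i = α_i`. -/
theorem stmt7 (n p l : ℕ) (hp : p.Prime) (hl : 1 ≤ l) (hn : n = p ^ l)
    (ζ : ℂ) (hζ : IsPrimitiveRoot ζ n)
    (α : Fin n → ℤ) (hpos : ∀ m : Fin n, 0 ≤ α m)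
    (hV : ∑ m : Fin n, (α m : ℂ) * ζ ^ (m : ℕ) = 0) :
    ∃ c : ℕ → ℕ,
      (∀ i : Fin n, (i : ℕ) < n / p → (c (i : ℕ) : ℤ) = α i) ∧
      α = ∑ i ∈ Finset.range (n / p), (c i : ℤ) • cycVec n p i := by
  have hp1 : 1 < p := hp.one_lt
  have hn0 : 0 < n := by rw [hn]; positivity
  set a := p ^ (l - 1) with ha
  have ha0 : 0 < a := pow_pos hp.pos _
  have hna : n = a * p := by
    rw [hn, ha, ← pow_succ]
    congr 1
    omega
  have hnpdiv : n / p = a := by rw [hna, Nat.mul_div_cancel _ hp.pos]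
  set A : ℕ → ℤ := fun k => if h : k < n then α ⟨k, h⟩ else 0 with hA
  have hApos : ∀ k, 0 ≤ A k := by
    intro k
    by_cases h : k < n
    · simpa [hA, h] using hpos ⟨k, h⟩
    · simp [hA, h]
  have hAα : ∀ m : Fin n, A (m : ℕ) = α m := by
    intro m
    simp [hA, m.isLt]
  have hVA : ∑ k ∈ Finset.range n, (A k : ℂ) * ζ ^ k = 0 := by
    rw [← hV, ← Fin.sum_univ_eq_sum_range (fun k => (A k : ℂ) * ζ ^ k) n]
    exact Finset.sum_congr rfl fun m _ => by rw [hAα m]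
  -- the double sum form
  have hS : ∑ j ∈ Finset.range p, ∑ i ∈ Finset.range a,
      (A (i + a * j) : ℂ) * ζ ^ (i + a * j) = 0 := by
    rw [← sum_range_mul_eq ha0 p (fun k => (A k : ℂ) * ζ ^ k), ← hna, hVA]
  -- geometric sum vanishing
  have hω : IsPrimitiveRoot (ζ ^ a) p := hζ.pow hn0 hna
  have hgs : ∑ j ∈ Finset.range p, (ζ ^ a) ^ j = 0 := hω.geom_sum_eq_zero hp1
  have hF : ∑ j ∈ Finset.range p, ∑ i ∈ Finset.range a,
      (A (i + a * (p - 1)) : ℂ) * ζ ^ (i + a * j) = 0 := by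
    rw [Finset.sum_comm]
    have : ∀ i ∈ Finset.range a, ∑ j ∈ Finset.range p,
        (A (i + a * (p - 1)) : ℂ) * ζ ^ (i + a * j) = 0 := by
      intro i _
      have : ∑ j ∈ Finset.range p, (A (i + a * (p - 1)) : ℂ) * ζ ^ (i + a * j)
          = ((A (i + a * (p - 1)) : ℂ) * ζ ^ i) * ∑ j ∈ Finset.range p, (ζ ^ a) ^ j := by
        rw [Finset.mul_sum]
        exact Finset.sum_congr rfl fun j _ => by rw [pow_add, pow_mul]; ring
      rw [this, hgs, mul_zero]
    exact Finset.sum_eq_zero this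
  -- the polynomial
  set q : Polynomial ℤ := ∑ j ∈ Finset.range (p - 1), ∑ i ∈ Finset.range a,
      C (A (i + a * j) - A (i + a * (p - 1))) * X ^ (i + a * j) with hq
  have haq : aeval ζ q = 0 := by
    have hqeval : aeval ζ q = ∑ j ∈ Finset.range (p - 1), ∑ i ∈ Finset.range a,
        ((A (i + a * j) : ℂ) * ζ ^ (i + a * j)
          - (A (i + a * (p - 1)) : ℂ) * ζ ^ (i + a * j)) := by
      rw [hq, map_sum]
      refine Finset.sum_congr rfl fun j _ => ?_
      rw [map_sum]
      refine Finset.sum_congr rfl fun i _ => ?_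
      simp [sub_mul]
    rw [hqeval]
    have hfull : ∑ j ∈ Finset.range p, ∑ i ∈ Finset.range a,
        ((A (i + a * j) : ℂ) * ζ ^ (i + a * j)
          - (A (i + a * (p - 1)) : ℂ) * ζ ^ (i + a * j)) = 0 := by
      simp only [Finset.sum_sub_distrib]
      rw [hS, hF, sub_zero]
    have hrange : Finset.range p = Finset.range (p - 1 + 1) := by congr 1; omega
    rw [hrange, Finset.sum_range_succ] at hfull
    have hlast : ∑ i ∈ Finset.range a,
        ((A (i + a * (p - 1)) : ℂ) * ζ ^ (i + a * (p - 1))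
          - (A (i + a * (p - 1)) : ℂ) * ζ ^ (i + a * (p - 1))) = 0 := by simp
    rw [hlast, add_zero] at hfull
    exact hfull
  -- q = 0 by degree considerations
  have hq0 : q = 0 := by
    by_contra hqne
    have hdeg : (minpoly ℤ ζ).degree ≤ q.degree :=
      minpoly.IsIntegrallyClosed.degree_le_of_ne_zero hqne haq
    have hmin : minpoly ℤ ζ = cyclotomic n ℤ := (cyclotomic_eq_minpoly hζ hn0).symm
    have hmindeg : (minpoly ℤ ζ).natDegree = a * (p - 1) := by
      rw [hmin, natDegree_cyclotomic, hn, Nat.totient_prime_pow hp hl, ha]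
    have hqdeg : q.natDegree ≤ a * (p - 1) - 1 := by
      rw [hq]
      refine Polynomial.natDegree_sum_le_of_forall_le _ _ fun j hj => ?_
      refine Polynomial.natDegree_sum_le_of_forall_le _ _ fun i hi => ?_
      simp only [Finset.mem_range] at hj hi
      calc (C (A (i + a * j) - A (i + a * (p - 1))) * X ^ (i + a * j)).natDegree
          ≤ i + a * j := natDegree_C_mul_X_pow_le _ _
        _ ≤ a * (p - 1) - 1 := by
            have : a * j ≤ a * (p - 2) := Nat.mul_le_mul_left a (by omega)
            have h2 : a * (p - 2) + a = a * (p - 1) := by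
              have : p - 1 = (p - 2) + 1 := by omega
              rw [this, Nat.mul_add, Nat.mul_one]
            omega
    have hnatle : (minpoly ℤ ζ).natDegree ≤ q.natDegree :=
      Polynomial.natDegree_le_natDegree hdeg
    have : 0 < a * (p - 1) := Nat.mul_pos ha0 (by omega)
    omega
  -- coefficient extraction
  have hcoeff : ∀ i < a, ∀ j < p - 1, A (i + a * j) = A (i + a * (p - 1)) := by
    intro i0 hi0 j0 hj0
    have : q.coeff (i0 + a * j0) = A (i0 + a * j0) - A (i0 + a * (p - 1)) := by
      rw [hq, finset_sum_coeff]
      have : ∀ j ∈ Finset.range (p - 1),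
          (∑ i ∈ Finset.range a, C (A (i + a * j) - A (i + a * (p - 1))) * X ^ (i + a * j)).coeff
            (i0 + a * j0)
          = if j = j0 then A (i0 + a * j0) - A (i0 + a * (p - 1)) else 0 := by
        intro j hj
        rw [finset_sum_coeff]
        by_cases hjj : j = j0
        · subst hjj
          rw [if_pos rfl]
          rw [Finset.sum_eq_single i0]
          · rw [coeff_C_mul, coeff_X_pow, if_pos rfl, mul_one]
          · intro i hi hne
            simp only [Finset.mem_range] at hi
            rw [coeff_C_mul, coeff_X_pow, if_neg, mul_zero]
            intro heq
            exact hne (rep_unique hi hi0 heq.symm).1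
          · intro habs
            exact absurd (Finset.mem_range.mpr hi0) habs
        · rw [if_neg hjj]
          refine Finset.sum_eq_zero fun i hi => ?_
          simp only [Finset.mem_range] at hi
          rw [coeff_C_mul, coeff_X_pow, if_neg, mul_zero]
          intro heq
          exact hjj ((rep_unique hi0 hi heq).2).symm
      rw [Finset.sum_congr rfl this, Finset.sum_ite_eq' (Finset.range (p - 1)),
        if_pos (Finset.mem_range.mpr hj0)]
    rw [hq0, coeff_zero] at this
    omega
  -- main periodicity
  have key : ∀ i < a, ∀ j < p, A (i + a * j) = A i := by
    intro i hi j hj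
    have hbase : A (i + a * (p - 1)) = A i := by
      have h0 := hcoeff i hi 0 (by omega)
      simpa using h0.symm
    rcases Nat.lt_or_ge j (p - 1) with hj' | hj'
    · rw [hcoeff i hi j hj', hbase]
    · have : j = p - 1 := by omega
      rw [this, hbase]
  -- construct c
  refine ⟨fun k => (A k).toNat, ?_, ?_⟩
  · intro i hi
    rw [Int.toNat_of_nonneg (hApos i), hAα]
  · funext m
    rw [hnpdiv]
    have hmsum : (∑ i ∈ Finset.range a, ((((A i).toNat : ℤ)) • cycVec n p i)) m
        = ∑ i ∈ Finset.range a, ((A i).toNat : ℤ) * cycVec n p i m := by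
      rw [Finset.sum_apply]
      exact Finset.sum_congr rfl fun i _ => rfl
    rw [hmsum]
    have hcyc : ∀ i, cycVec n p i m
        = ∑ j ∈ Finset.range p, (if (m : ℕ) = i + a * j then (1 : ℤ) else 0) := by
      intro i
      rw [cycVec, Finset.sum_apply]
      exact Finset.sum_congr rfl fun j _ => by rw [stdVec, hnpdiv]
    set i0 := (m : ℕ) % a with hi0def
    set j0 := (m : ℕ) / a with hj0def
    have hi0 : i0 < a := Nat.mod_lt _ ha0
    have hj0 : j0 < p := by
      rw [hj0def]
      exact Nat.div_lt_of_lt_mul (hna ▸ m.isLt)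
    have hm0 : (m : ℕ) = i0 + a * j0 := by rw [hi0def, hj0def, Nat.mod_add_div]
    have hmain : ∑ i ∈ Finset.range a, ((A i).toNat : ℤ) * cycVec n p i m
        = ((A i0).toNat : ℤ) := by
      have hc : ∀ i ∈ Finset.range a, ((A i).toNat : ℤ) * cycVec n p i m
          = if i = i0 then ((A i0).toNat : ℤ) else 0 := by
        intro i hi
        simp only [Finset.mem_range] at hi
        by_cases hii : i = i0
        · rw [if_pos hii, hcyc, hii]
          have hj : ∀ j ∈ Finset.range p, (if (m : ℕ) = i0 + a * j then (1 : ℤ) else 0)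
              = if j = j0 then 1 else 0 := by
            intro j _
            by_cases hjj : j = j0
            · rw [hjj, if_pos hm0, if_pos rfl]
            · rw [if_neg hjj, if_neg]
              intro heq
              rw [hm0] at heq
              exact hjj ((rep_unique hi0 hi0 heq).2).symm
          rw [Finset.sum_congr rfl hj, Finset.sum_ite_eq' (Finset.range p),
            if_pos (Finset.mem_range.mpr hj0), mul_one]
        · rw [if_neg hii, hcyc]
          have hj : ∀ j ∈ Finset.range p, (if (m : ℕ) = i + a * j then (1 : ℤ) else 0) = 0 := by
            intro j _
            rw [if_neg]
            intro heq
            rw [hm0] at heq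
            exact hii ((rep_unique hi0 hi heq).1).symm
          rw [Finset.sum_eq_zero hj, mul_zero]
      rw [Finset.sum_congr rfl hc, Finset.sum_ite_eq' (Finset.range a),
        if_pos (Finset.mem_range.mpr hi0)]
    rw [hmain, Int.toNat_of_nonneg (hApos i0), ← key i0 hi0 j0 hj0, ← hm0, hAα]
end
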